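/- Let p be a prime, q = p^f, 𝔽_q a finite field with q elements, K a field, and ι : 𝔽_q →+* K a ring homomorphism. Fix r : Fin f → ℕ with 0 ≤ r_j ≤ p−1 for all j. Consider the polynomial ring K[x_0,…,x_{f−1},y_0,…,y_{f−1}] and let V be the K-linear span of the monomials ∏_{j=0}^{f−1} x_j^{r_j−i_j} y_j^{i_j} over all i : Fin f → ℕ with 0 ≤ i_j ≤ r_j for all j. For b ∈ 𝔽_q, let u_b be the K-algebra endomorphism of the polynomial ring determined by x_j ↦ x_j and y_j ↦ ι(b)^{p^j} · x_j + y_j for all j. Then for P ∈ V one has u_b(P) = P for all b ∈ 𝔽_q if and only if P is a K-scalar multiple of ∏_{j=0}^{f−1} x_j^{r_j}. In particular, the space of such invariant elements of V is one-dimensional over K. -/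

import Mathlib

open MvPolynomial


private lemma digits_sum_lt {p : ℕ} (hp : 2 ≤ p) : ∀ {n : ℕ} (a : Fin n → ℕ),
    (∀ j, a j < p) → ∑ j : Fin n, p ^ (j : ℕ) * a j < p ^ n := by
  intro n
  induction n with
  | zero => intro a _; simp
  | succ n ih =>
    intro a ha
    rw [Fin.sum_univ_succ]
    have hrw : ∀ j : Fin n, p ^ (j.succ : ℕ) * a j.succ = p * (p ^ (j : ℕ) * a j.succ) := by
      intro j
      simp [Fin.val_succ, pow_succ]
      ring
    rw [Finset.sum_congr rfl (fun j _ => hrw j), ← Finset.mul_sum]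
    have hS : ∑ j : Fin n, p ^ (j : ℕ) * a j.succ < p ^ n := ih _ (fun j => ha j.succ)
    have h0 : a 0 < p := ha 0
    calc p ^ ((0 : Fin (n+1)) : ℕ) * a 0 + p * ∑ j : Fin n, p ^ (j : ℕ) * a j.succ
        < p * (∑ j : Fin n, p ^ (j : ℕ) * a j.succ + 1) := by
          simp only [Fin.val_zero, pow_zero, one_mul, Nat.mul_add, Nat.mul_one]
          omega
      _ ≤ p * p ^ n := Nat.mul_le_mul_left p hS
      _ = p ^ (n + 1) := by ring

private lemma digits_inj {p : ℕ} (hp : 2 ≤ p) : ∀ {n : ℕ} (a b : Fin n → ℕ),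
    (∀ j, a j < p) → (∀ j, b j < p) →
    ∑ j : Fin n, p ^ (j : ℕ) * a j = ∑ j : Fin n, p ^ (j : ℕ) * b j → a = b := by
  intro n
  induction n with
  | zero => intro a b _ _ _; funext j; exact absurd j.2 (by omega)
  | succ n ih =>
    intro a b ha hb h
    rw [Fin.sum_univ_succ, Fin.sum_univ_succ] at h
    have hrw : ∀ c : Fin (n+1) → ℕ, ∑ j : Fin n, p ^ (j.succ : ℕ) * c j.succ
        = p * ∑ j : Fin n, p ^ (j : ℕ) * c j.succ := by
      intro c
      rw [Finset.mul_sum]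
      refine Finset.sum_congr rfl fun j _ => ?_
      simp [Fin.val_succ, pow_succ]; ring
    rw [hrw a, hrw b] at h
    simp only [Fin.val_zero, pow_zero, one_mul] at h
    have h0 : a 0 = b 0 := by
      have := congrArg (· % p) h
      simpa [Nat.add_mul_mod_self_left, Nat.mod_eq_of_lt (ha 0), Nat.mod_eq_of_lt (hb 0)]
        using this
    have htail : (fun j : Fin n => a j.succ) = fun j => b j.succ := by
      refine ih _ _ (fun j => ha j.succ) (fun j => hb j.succ) ?_
      have hp0 : 0 < p := by omega
      exact Nat.eq_of_mul_eq_mul_left hp0 (by omega :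
        p * ∑ j : Fin n, p ^ (j : ℕ) * a j.succ = p * ∑ j : Fin n, p ^ (j : ℕ) * b j.succ)
    funext j
    rcases Fin.eq_zero_or_eq_succ j with rfl | ⟨k, rfl⟩
    · exact h0
    · exact congrFun htail k

/-- The space of `U`-invariants in the polynomial model of `Sym^{r⃗}` is the line spanned
by `x^{r⃗} = ∏_j x_j^{r_j}`: a polynomial `P` in the span `V` of the monomials
`∏_j x_j^{r_j - i_j} y_j^{i_j}` (for `0 ≤ i⃗ ≤ r⃗`) is fixed by every substitution
`x_j ↦ x_j, y_j ↦ ι(b)^{p^j} x_j + y_j` (`b ∈ 𝔽_q`) if and only if it is a scalar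
multiple of `∏_j x_j^{r_j}`. -/
theorem invariants_eq_span_xr (p f : ℕ) (hp : p.Prime)
    (Fq : Type*) [Field Fq] [Fintype Fq] (hcard : Fintype.card Fq = p ^ f)
    (K : Type*) [Field K] (ι : Fq →+* K)
    (r : Fin f → ℕ) (hr : ∀ j, r j ≤ p - 1)
    (P : MvPolynomial (Fin f ⊕ Fin f) K)
    (hP : P ∈ Submodule.span K
      {Q : MvPolynomial (Fin f ⊕ Fin f) K | ∃ i : Fin f → ℕ, (∀ j, i j ≤ r j) ∧
        Q = ∏ j, X (Sum.inl j) ^ (r j - i j) * X (Sum.inr j) ^ (i j)}) :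
    (∀ b : Fq,
        aeval (R := K) (Sum.elim
          (fun j => (X (Sum.inl j) : MvPolynomial (Fin f ⊕ Fin f) K))
          (fun j : Fin f => C (ι b ^ p ^ (j : ℕ)) * X (Sum.inl j) + X (Sum.inr j))) P = P)
      ↔ ∃ c : K, P = c • ∏ j, (X (Sum.inl j) : MvPolynomial (Fin f ⊕ Fin f) K) ^ r j := by
  classical
  constructor
  · intro hinv
    -- reindex the spanning set by a finite type
    set v : (∀ j : Fin f, Fin (r j + 1)) → MvPolynomial (Fin f ⊕ Fin f) K := fun σ =>
      ∏ j, X (Sum.inl j) ^ (r j - (σ j : ℕ)) * X (Sum.inr j) ^ ((σ j : ℕ)) with hv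
    have hset : {Q : MvPolynomial (Fin f ⊕ Fin f) K | ∃ i : Fin f → ℕ, (∀ j, i j ≤ r j) ∧
        Q = ∏ j, X (Sum.inl j) ^ (r j - i j) * X (Sum.inr j) ^ (i j)} = Set.range v := by
      ext Q
      constructor
      · rintro ⟨i, hi, rfl⟩
        exact ⟨fun j => ⟨i j, Nat.lt_succ_of_le (hi j)⟩, rfl⟩
      · rintro ⟨σ, rfl⟩
        exact ⟨fun j => (σ j : ℕ), fun j => Nat.lt_succ_iff.mp (σ j).2, rfl⟩
    rw [hset, Submodule.mem_span_range_iff_exists_fun] at hP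
    obtain ⟨c, hc⟩ := hP
    set xr : MvPolynomial (Fin f ⊕ Fin f) K := ∏ j, X (Sum.inl j) ^ r j with hxr
    set e : (∀ j : Fin f, Fin (r j + 1)) → ℕ :=
      fun σ => ∑ j : Fin f, p ^ (j : ℕ) * (σ j : ℕ) with he
    have hxr_ne : xr ≠ 0 := by
      rw [hxr]
      exact Finset.prod_ne_zero_iff.mpr fun j _ => pow_ne_zero _ (X_ne_zero _)
    -- scalar relation from comparing pure-x parts
    have key : ∀ b : Fq, ∑ σ, c σ * ι b ^ e σ = c 0 := by
      intro b
      set ub : MvPolynomial (Fin f ⊕ Fin f) K →ₐ[K] MvPolynomial (Fin f ⊕ Fin f) K :=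
        aeval (Sum.elim
          (fun j => (X (Sum.inl j) : MvPolynomial (Fin f ⊕ Fin f) K))
          (fun j : Fin f => C (ι b ^ p ^ (j : ℕ)) * X (Sum.inl j) + X (Sum.inr j))) with hub
      set φ : MvPolynomial (Fin f ⊕ Fin f) K →ₐ[K] MvPolynomial (Fin f ⊕ Fin f) K :=
        aeval (Sum.elim
          (fun j => (X (Sum.inl j) : MvPolynomial (Fin f ⊕ Fin f) K))
          (fun _ => 0)) with hφ
      have h1 : ∀ σ, φ (ub (v σ)) = C (ι b ^ e σ) * xr := by
        intro σ
        have hfac : ∀ j : Fin f,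
            (X (Sum.inl j) : MvPolynomial (Fin f ⊕ Fin f) K) ^ (r j - (σ j : ℕ)) *
              (C (ι b) ^ p ^ (j : ℕ) * X (Sum.inl j)) ^ ((σ j : ℕ))
            = C (ι b) ^ (p ^ (j : ℕ) * (σ j : ℕ)) * X (Sum.inl j) ^ r j := by
          intro j
          have hle : (σ j : ℕ) ≤ r j := Nat.lt_succ_iff.mp (σ j).2
          calc (X (Sum.inl j) : MvPolynomial (Fin f ⊕ Fin f) K) ^ (r j - (σ j : ℕ)) *
              (C (ι b) ^ p ^ (j : ℕ) * X (Sum.inl j)) ^ ((σ j : ℕ))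
              = C (ι b) ^ (p ^ (j : ℕ) * (σ j : ℕ)) *
                (X (Sum.inl j) ^ (r j - (σ j : ℕ)) * X (Sum.inl j) ^ ((σ j : ℕ))) := by
                rw [mul_pow, ← pow_mul]; ring
            _ = C (ι b) ^ (p ^ (j : ℕ) * (σ j : ℕ)) * X (Sum.inl j) ^ r j := by
                rw [← pow_add, Nat.sub_add_cancel hle]
        rw [hv]
        simp only [hub, hφ, map_prod, map_mul, map_pow, aeval_X, Sum.elim_inl, Sum.elim_inr,
          map_add, aeval_C, algebraMap_eq, add_zero]
        rw [Finset.prod_congr rfl (fun j _ => hfac j), Finset.prod_mul_distrib,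
          Finset.prod_pow_eq_pow_sum]
      have h2 : φ P = C (c 0) * xr := by
        rw [← hc, map_sum]
        have hz : ∀ σ ∈ (Finset.univ : Finset (∀ j : Fin f, Fin (r j + 1))), σ ≠ 0 →
            φ (c σ • v σ) = 0 := by
          intro σ _ hσ
          obtain ⟨j, hj⟩ : ∃ j, (σ j : ℕ) ≠ 0 := by
            by_contra hcon
            push_neg at hcon
            exact hσ (funext fun j => Fin.ext (by simp [hcon j]))
          rw [map_smul, hv]
          simp only [hφ, map_prod, map_mul, map_pow, aeval_X, Sum.elim_inl, Sum.elim_inr]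
          rw [Finset.prod_eq_zero (Finset.mem_univ j) (by rw [zero_pow hj, mul_zero]),
            smul_zero]
        rw [Finset.sum_eq_single 0 hz (fun h => absurd (Finset.mem_univ _) h), map_smul, hv]
        simp only [hφ, map_prod, map_mul, map_pow, aeval_X, Sum.elim_inl, Sum.elim_inr]
        simp only [Pi.zero_apply, Fin.val_zero, pow_zero, mul_one, Nat.sub_zero,
          smul_eq_C_mul, hxr]
      have hL : φ (ub P) = C (∑ σ, c σ * ι b ^ e σ) * xr := by
        rw [← hc, map_sum, map_sum]
        simp only [map_smul, h1]
        rw [map_sum, Finset.sum_mul]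
        exact Finset.sum_congr rfl fun σ _ => by rw [smul_eq_C_mul, map_mul, mul_assoc]
      have hEq : C (∑ σ, c σ * ι b ^ e σ) * xr = C (c 0) * xr := by
        rw [← hL, ← h2]
        exact congrArg φ (hinv b)
      exact C_injective _ _ (mul_right_cancel₀ hxr_ne hEq)
    have h2p : 2 ≤ p := hp.two_le
    have hσp : ∀ (σ : ∀ j : Fin f, Fin (r j + 1)) (j), (σ j : ℕ) < p := by
      intro σ j
      have h1 : (σ j : ℕ) ≤ r j := Nat.lt_succ_iff.mp (σ j).2
      have h2 := hr j
      omega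
    have einj : ∀ σ τ : ∀ j : Fin f, Fin (r j + 1), e σ = e τ → σ = τ := by
      intro σ τ h
      have := digits_inj h2p (fun j => (σ j : ℕ)) (fun j => (τ j : ℕ)) (hσp σ) (hσp τ) h
      funext j
      exact Fin.ext (congrFun this j)
    have helt : ∀ σ, e σ < p ^ f := fun σ => digits_sum_lt h2p _ (hσp σ)
    have he0 : e 0 = 0 := by simp [he]
    set G : Polynomial K := (∑ σ, Polynomial.C (c σ) * Polynomial.X ^ e σ) - Polynomial.C (c 0)
      with hG
    have hGeval : ∀ b : Fq, Polynomial.eval (ι b) G = 0 := by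
      intro b
      rw [hG, Polynomial.eval_sub, Polynomial.eval_finset_sum]
      simp only [Polynomial.eval_mul, Polynomial.eval_C, Polynomial.eval_pow, Polynomial.eval_X]
      rw [key b, sub_self]
    have hGdeg : G.natDegree < Fintype.card Fq := by
      rw [hcard]
      have hq1 : 1 ≤ p ^ f := Nat.one_le_pow _ _ hp.pos
      have h1 : (∑ σ, Polynomial.C (c σ) * Polynomial.X ^ e σ).natDegree ≤ p ^ f - 1 :=
        Polynomial.natDegree_sum_le_of_forall_le _ _ fun σ _ =>
          (Polynomial.natDegree_C_mul_X_pow_le _ _).trans (by have := helt σ; omega)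
      have h2 := Polynomial.natDegree_sub_le (∑ σ, Polynomial.C (c σ) * Polynomial.X ^ e σ)
        (Polynomial.C (c 0))
      rw [Polynomial.natDegree_C] at h2
      rw [← hG] at h2
      omega
    have hG0 : G = 0 :=
      Polynomial.eq_zero_of_natDegree_lt_card_of_eval_eq_zero G ι.injective hGeval hGdeg
    have hczero : ∀ τ, τ ≠ 0 → c τ = 0 := by
      intro τ hτ
      have heτ : e τ ≠ 0 := fun h => hτ (einj τ 0 (by rw [h, he0]))
      have hcf := congrArg (fun g => Polynomial.coeff g (e τ)) hG0
      simp only [hG, Polynomial.coeff_sub, Polynomial.finset_sum_coeff, Polynomial.coeff_C_mul,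
        Polynomial.coeff_X_pow, Polynomial.coeff_C, if_neg heτ, Polynomial.coeff_zero,
        sub_zero, mul_ite, mul_one, mul_zero] at hcf
      rw [Finset.sum_eq_single τ (fun σ _ hστ => if_neg fun h => hστ (einj σ τ h.symm))
        (fun h => absurd (Finset.mem_univ _) h), if_pos rfl] at hcf
      exact hcf
    refine ⟨c 0, ?_⟩
    rw [← hc]
    rw [Finset.sum_eq_single 0 (fun σ _ hσ => by rw [hczero σ hσ, zero_smul])
      (fun h => absurd (Finset.mem_univ _) h)]
    congr 1
    simp [hv, hxr]
  · rintro ⟨c, rfl⟩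
    intro b
    rw [map_smul, map_prod]
    simp
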